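/- Let ν₀,...,ν_n ∈ {+1,-1} and λ a formal parameter. The 'reduced' product defined on the free ℂ[[λ]]-module with formal basis symbols e(P,Q) (indexed by pairs P,Q ∈ ℕ₀^{1+n} with |P|=|Q|) by e(P,Q) ⋆_red e(R,S) = ∑_{T ≤ min{Q,R}} sgn(T) · ( (1/λ)^(↓|Q+R-T|) / ( (1/λ)^(↓|Q|) · (1/λ)^(↓|R|) ) ) · T! C(Q,T) C(R,T) e(P+R-T, Q+S-T) has well-defined coefficients in ℂ[[λ]] (all negative powers of λ cancel). -/

import Mathlib

open scoped BigOperators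
open PowerSeries Finset

set_option maxHeartbeats 1000000 in
theorem aux_key (c : ℂ) (q r m t : ℕ) (hm : m + t = q + r) :
    ∃ f : PowerSeries ℂ,
      (HahnSeries.ofPowerSeries ℤ ℂ f : LaurentSeries ℂ)
        = HahnSeries.C c
          * (∏ j ∈ Finset.range m,
              (((HahnSeries.ofPowerSeries ℤ ℂ PowerSeries.X : LaurentSeries ℂ))⁻¹ - (j : LaurentSeries ℂ)))
          / ((∏ j ∈ Finset.range q,
                (((HahnSeries.ofPowerSeries ℤ ℂ PowerSeries.X : LaurentSeries ℂ))⁻¹ - (j : LaurentSeries ℂ)))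
            * (∏ j ∈ Finset.range r,
                (((HahnSeries.ofPowerSeries ℤ ℂ PowerSeries.X : LaurentSeries ℂ))⁻¹ - (j : LaurentSeries ℂ)))) := by
  set φ := HahnSeries.ofPowerSeries ℤ ℂ with hφ
  set Y : LaurentSeries ℂ := φ PowerSeries.X with hY
  have hYne : Y ≠ 0 := by simp [hY, hφ]
  have hfac : ∀ j : ℕ, Y⁻¹ - (j : LaurentSeries ℂ)
      = Y⁻¹ * φ (1 - PowerSeries.C (j:ℂ) * PowerSeries.X) := by
    intro j
    have h1 : φ (1 - PowerSeries.C (j:ℂ) * PowerSeries.X) = 1 - (j : LaurentSeries ℂ) * Y := by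
      rw [map_sub, map_mul, map_one, HahnSeries.ofPowerSeries_C, ← hY, map_natCast]
    rw [h1, mul_sub, mul_one, mul_comm ((j : LaurentSeries ℂ)) Y, ← mul_assoc,
      inv_mul_cancel₀ hYne, one_mul]
  have key : ∀ N : ℕ, ∏ j ∈ Finset.range N,
      (Y⁻¹ - (j : LaurentSeries ℂ))
      = (Y⁻¹)^N * φ (∏ j ∈ Finset.range N, (1 - PowerSeries.C (j:ℂ) * PowerSeries.X)) := by
    intro N
    rw [Finset.prod_congr rfl (fun j _ => hfac j), Finset.prod_mul_distrib,
      Finset.prod_const, Finset.card_range, map_prod]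
  have hne : ∀ N : ℕ, φ (∏ j ∈ Finset.range N, (1 - PowerSeries.C (j:ℂ) * PowerSeries.X)) ≠ 0 := by
    intro N h
    have h0 : (∏ j ∈ Finset.range N, (1 - PowerSeries.C (j:ℂ) * PowerSeries.X)) = (0:ℂ⟦X⟧) :=
      HahnSeries.ofPowerSeries_injective (h.trans (map_zero _).symm)
    have h1 := congrArg (PowerSeries.constantCoeff) h0
    simp [map_prod] at h1
  set D : PowerSeries ℂ := (∏ j ∈ Finset.range q, (1 - PowerSeries.C (j:ℂ) * PowerSeries.X))
      * (∏ j ∈ Finset.range r, (1 - PowerSeries.C (j:ℂ) * PowerSeries.X)) with hD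
  have hDc : PowerSeries.constantCoeff D = 1 := by
    simp [hD, map_prod]
  have hDinv : D * D⁻¹ = 1 := PowerSeries.mul_inv_cancel _ (by rw [hDc]; norm_num)
  refine ⟨PowerSeries.C c * (PowerSeries.X ^ t
      * (∏ j ∈ Finset.range m, (1 - PowerSeries.C (j:ℂ) * PowerSeries.X)) * D⁻¹), ?_⟩
  rw [key, key, key]
  have hφDinv : φ D⁻¹ = (φ D)⁻¹ := by
    refine eq_inv_of_mul_eq_one_left ?_
    rw [← map_mul, mul_comm, hDinv, map_one]
  rw [map_mul, map_mul, map_mul, map_pow, hφDinv, HahnSeries.ofPowerSeries_C, ← hY]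
  rw [hD, map_mul]
  set A := φ (∏ j ∈ Finset.range m, (1 - PowerSeries.C (j:ℂ) * PowerSeries.X))
  set B := φ (∏ j ∈ Finset.range q, (1 - PowerSeries.C (j:ℂ) * PowerSeries.X))
  set E := φ (∏ j ∈ Finset.range r, (1 - PowerSeries.C (j:ℂ) * PowerSeries.X))
  have hBne : B ≠ 0 := hne q
  have hEne : E ≠ 0 := hne r
  have hpow : Y ^ t * Y ^ m = Y ^ q * Y ^ r := by
    rw [← pow_add, ← pow_add, add_comm t m, hm]
  field_simp
  rw [one_div, inv_pow, inv_pow, inv_pow]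
  have hYm : Y ^ m ≠ 0 := pow_ne_zero _ hYne
  have hYq : Y ^ q ≠ 0 := pow_ne_zero _ hYne
  have hYr : Y ^ r ≠ 0 := pow_ne_zero _ hYne
  have hYt : Y ^ t = Y ^ q * Y ^ r * (Y ^ m)⁻¹ := by
    rw [← hpow, mul_assoc, mul_inv_cancel₀ hYm, mul_one]
  rw [hYt]
  calc HahnSeries.C c * (Y ^ q * Y ^ r * (Y ^ m)⁻¹) * A * (Y ^ q)⁻¹ * (Y ^ r)⁻¹
      = HahnSeries.C c * A * (Y ^ m)⁻¹ * (Y ^ q * (Y ^ q)⁻¹) * (Y ^ r * (Y ^ r)⁻¹) := by ring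
    _ = HahnSeries.C c * A * (Y ^ m)⁻¹ := by
      rw [mul_inv_cancel₀ hYq, mul_inv_cancel₀ hYr, mul_one, mul_one]


/-- Well-definedness of the coefficients of the reduced star product:
for signs `ν_k ∈ {±1}`, multiindices `P,Q,R,S ∈ ℕ₀^{1+n}` with `|P| = |Q|`, `|R| = |S|`,
and `T ≤ min{Q,R}`, the structure coefficient
`sgn(T) · (1/λ)^(↓|Q+R-T|) / ((1/λ)^(↓|Q|) · (1/λ)^(↓|R|)) · T! C(Q,T) C(R,T)`
— a priori only a Laurent series in `λ` (here `1/λ = X⁻¹` in the field of formal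
Laurent series `ℂ⸨X⸩`) — is in fact a formal power series: all negative powers of `λ`
cancel. -/
theorem reduced_star_coefficient_is_power_series
    (n : ℕ) (ν : Fin (n + 1) → ℤ) (hν : ∀ k, ν k = 1 ∨ ν k = -1)
    (P Q R S T : Fin (n + 1) → ℕ)
    (hPQ : ∑ k, P k = ∑ k, Q k) (hRS : ∑ k, R k = ∑ k, S k)
    (hT : ∀ k, T k ≤ min (Q k) (R k)) :
    ∃ f : PowerSeries ℂ,
      (HahnSeries.ofPowerSeries ℤ ℂ f : LaurentSeries ℂ)
        = HahnSeries.C ((∏ k, ((ν k : ℂ)) ^ (T k)) * (∏ k, ((T k).factorial : ℂ))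
              * (∏ k, ((Q k).choose (T k) : ℂ)) * (∏ k, ((R k).choose (T k) : ℂ)))
          * (∏ j ∈ Finset.range (∑ k, (Q k + R k - T k)),
              (((HahnSeries.ofPowerSeries ℤ ℂ PowerSeries.X : LaurentSeries ℂ))⁻¹ - (j : LaurentSeries ℂ)))
          / ((∏ j ∈ Finset.range (∑ k, Q k),
                (((HahnSeries.ofPowerSeries ℤ ℂ PowerSeries.X : LaurentSeries ℂ))⁻¹ - (j : LaurentSeries ℂ)))
            * (∏ j ∈ Finset.range (∑ k, R k),
                (((HahnSeries.ofPowerSeries ℤ ℂ PowerSeries.X : LaurentSeries ℂ))⁻¹ - (j : LaurentSeries ℂ)))) := by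
  have hm : (∑ k, (Q k + R k - T k)) + ∑ k, T k = (∑ k, Q k) + (∑ k, R k) := by
    rw [← Finset.sum_add_distrib, ← Finset.sum_add_distrib]
    exact Finset.sum_congr rfl fun k _ => by have := hT k; omega
  exact aux_key _ _ _ _ _ hm
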